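/- There exists a rank-ordered lexicographic set extension that violates fixed-cardinality responsiveness: with candidates a ≻ b ≻ c ≻ d ≻ e and the order ⪰₂ on equal-size sets that compares sets by their second-best element first (breaking further ties arbitrarily, say by the leximax order on the remaining elements), we have {c,d} ⪰₂ {a,e} but not {b,c,d} ⪰₂ {a,b,e}. -/

import Mathlib

/-- Swap the first two entries of a list. -/
def swapTwo {α : Type*} : List α → List α
  | a :: b :: t => b :: a :: t
  | l => l

/-- The key list for the "second-best first" comparison: the decreasing list of
the set's elements with the first two entries swapped, so that the second-best
element comes first and ties are broken leximax-style on the rest. -/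
def keyList {C : Type*} [LinearOrder C] (X : Finset C) : List C :=
  swapTwo (X.sort (· ≤ ·)).reverse

/-- The rank-ordered lexicographic extension comparing the second-best element
first, with remaining ties broken by the leximax order on the other elements. -/
def secondBest {C : Type*} [LinearOrder C] (X Y : Finset C) : Prop :=
  keyList X = keyList Y ∨ List.Lex (· < ·) (keyList Y) (keyList X)

lemma sortHelper {n : ℕ} (X : Finset (Fin n)) (l : List (Fin n))
    (h1 : List.Perm (X.sort (· ≤ ·)) l) (h2 : l.Pairwise (· ≤ ·)) :
    X.sort (· ≤ ·) = l :=
  List.Perm.eq_of_pairwise' (Finset.pairwise_sort _ _) h2 h1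

lemma sort1 : (({2,1} : Finset (Fin 5)).sort (· ≤ ·)) = [1,2] := by
  apply sortHelper
  · apply List.perm_of_nodup_nodup_toFinset_eq (Finset.sort_nodup _ _) (by decide)
    simp; decide
  · decide

lemma sort2 : (({4,0} : Finset (Fin 5)).sort (· ≤ ·)) = [0,4] := by
  apply sortHelper
  · apply List.perm_of_nodup_nodup_toFinset_eq (Finset.sort_nodup _ _) (by decide)
    simp; decide
  · decide

lemma sort3 : (({3,2,1} : Finset (Fin 5)).sort (· ≤ ·)) = [1,2,3] := by
  apply sortHelper
  · apply List.perm_of_nodup_nodup_toFinset_eq (Finset.sort_nodup _ _) (by decide)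
    simp; decide
  · decide

lemma sort4 : (({4,3,0} : Finset (Fin 5)).sort (· ≤ ·)) = [0,3,4] := by
  apply sortHelper
  · apply List.perm_of_nodup_nodup_toFinset_eq (Finset.sort_nodup _ _) (by decide)
    simp; decide
  · decide

/-- With `a ≻ b ≻ c ≻ d ≻ e` (here `a = 4, b = 3, c = 2, d = 1, e = 0` in `Fin 5`),
the "second-best first" extension satisfies `{c,d} ⪰₂ {a,e}` but not
`{b,c,d} ⪰₂ {a,b,e}`, so it violates fixed-cardinality responsiveness. -/
theorem stmt_4 :
    secondBest ({2, 1} : Finset (Fin 5)) ({4, 0} : Finset (Fin 5)) ∧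
    ¬ secondBest ({3, 2, 1} : Finset (Fin 5)) ({4, 3, 0} : Finset (Fin 5)) := by
  constructor <;>
    simp only [secondBest, keyList, sort1, sort2, sort3, sort4] <;>
    decide
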